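/- arXiv:1606.07197 — 2 statements merged into one kernel-verified Lean document; each statement's English description precedes it below -/
import Mathlib

section
/- For 0 < P_out < 1 with (1 − P_out)² ≠ 1/2, the solution P_out^NC = (√((1 − ε)² + P_out(2ε − 1)) − (1 − ε))/(2ε − 1), where ε = (1 − P_out)², satisfies 0 < P_out^NC < 1. -/
open Real

/-- The NNCC per-link cellular outage probability
`P_out^NC = (√((1−ε)² + P_out(2ε−1)) − (1−ε))/(2ε−1)`, with `ε = (1 − P_out)²`,
satisfies `0 < P_out^NC < 1` for `0 < P_out < 1` with `ε ≠ 1/2`. -/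
theorem nncc_outage_in_unit_interval (P_out ε : ℝ) (hP1 : 0 < P_out)
    (hP2 : P_out < 1) (hε : ε = (1 - P_out) ^ 2) (hεhalf : ε ≠ 1 / 2) :
    0 < (Real.sqrt ((1 - ε) ^ 2 + P_out * (2 * ε - 1)) - (1 - ε)) / (2 * ε - 1) ∧
    (Real.sqrt ((1 - ε) ^ 2 + P_out * (2 * ε - 1)) - (1 - ε)) / (2 * ε - 1) < 1 := by
  have hε0 : 0 < ε := by rw [hε]; nlinarith
  have hε1 : ε < 1 := by nlinarith [sq_nonneg (1 - P_out)]
  set D := (1 - ε) ^ 2 + P_out * (2 * ε - 1) with hDdef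
  set s := Real.sqrt D with hsdef
  have hs0 : 0 ≤ s := Real.sqrt_nonneg _
  rcases lt_or_gt_of_ne hεhalf with hd | hd
  · -- 2ε - 1 < 0
    have hd' : 2 * ε - 1 < 0 := by linarith [hd]
    have hD : 0 < D := by nlinarith
    have hs2 : s ^ 2 = D := Real.sq_sqrt hD.le
    constructor
    · apply div_pos_of_neg_of_neg _ hd'
      have : s < 1 - ε := by nlinarith
      linarith
    · rw [div_lt_iff_of_neg hd']
      have : ε < s := by nlinarith
      linarith
  · -- 2ε - 1 > 0
    have hd' : 0 < 2 * ε - 1 := by linarith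
    have hD : 0 < D := by nlinarith
    have hs2 : s ^ 2 = D := Real.sq_sqrt hD.le
    constructor
    · apply div_pos _ hd'
      have : 1 - ε < s := by nlinarith
      linarith
    · rw [div_lt_one hd']
      have : s < ε := by nlinarith
      linarith
end

section
/- Let r have density 2πρ r e^{−πρ r²} independent of θ uniform on [−π/2, 3π/2]. For p > 2εη r₁², P(P^NC ≤ p) = ∫_{−π/2}^{3π/2} (1 − e^{−πρ R₂(θ)²})/(2π) dθ, where P^NC = (2ζ+εη) r² + 2εη r₁ cos θ · r + 2εη r₁² and R₂(θ) = (−εη r₁ cos θ + √((εη r₁ cos θ)² − (2ζ+εη)(2εη r₁² − p)))/(2ζ + εη). -/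
open Real MeasureTheory

open ENNReal

lemma quad_iff (a b c p x : ℝ) (ha : 0 < a) (hcp : c < p) (hx : 0 < x) :
    a * x ^ 2 + 2 * b * x + c ≤ p ↔ x ≤ (-b + Real.sqrt (b ^ 2 - a * (c - p))) / a := by
  have hD : 0 ≤ b ^ 2 - a * (c - p) := by nlinarith
  have hs := Real.sq_sqrt hD
  have hs0 := Real.sqrt_nonneg (b ^ 2 - a * (c - p))
  rw [le_div_iff₀ ha]
  constructor
  · intro h
    have key : (x * a + b) ^ 2 ≤ b ^ 2 - a * (c - p) := by nlinarith
    rcases le_or_gt (x * a + b) 0 with h0 | h0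
    · nlinarith
    · nlinarith [sq_nonneg (Real.sqrt (b ^ 2 - a * (c - p)) - (x * a + b))]
  · intro h
    have hb : -b ≤ Real.sqrt (b ^ 2 - a * (c - p)) := by nlinarith [sq_nonneg (Real.sqrt (b ^ 2 - a * (c - p)) + b)]
    have key : 0 ≤ (Real.sqrt (b ^ 2 - a * (c - p)) - (x * a + b)) * (Real.sqrt (b ^ 2 - a * (c - p)) + (x * a + b)) := by
      apply mul_nonneg <;> nlinarith
    nlinarith [mul_pos ha hx]

lemma quad_pos (a b c p : ℝ) (ha : 0 < a) (hcp : c < p) :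
    0 < (-b + Real.sqrt (b ^ 2 - a * (c - p))) / a := by
  have hD : 0 ≤ b ^ 2 - a * (c - p) := by nlinarith
  have hs := Real.sq_sqrt hD
  have hs0 := Real.sqrt_nonneg (b ^ 2 - a * (c - p))
  apply div_pos _ ha
  nlinarith [sq_nonneg (Real.sqrt (b ^ 2 - a * (c - p)) + b)]

lemma dint (ρ R : ℝ) (hρ : 0 < ρ) (hR : 0 ≤ R) :
    ∫⁻ x in Set.Ioc 0 R, ENNReal.ofReal (2 * π * ρ * x * Real.exp (-(π * ρ * x ^ 2)))
      = ENNReal.ofReal (1 - Real.exp (-(π * ρ * R ^ 2))) := by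
  have hcont : Continuous fun x : ℝ => 2 * π * ρ * x * Real.exp (-(π * ρ * x ^ 2)) := by fun_prop
  have hderiv : ∀ x ∈ Set.uIcc 0 R, HasDerivAt (fun x => -Real.exp (-(π * ρ * x ^ 2)))
      (2 * π * ρ * x * Real.exp (-(π * ρ * x ^ 2))) x := by
    intro x _
    have h1 : HasDerivAt (fun x : ℝ => -(π * ρ * x ^ 2)) (-(π * ρ * (2 * x))) x := by
      simpa [Pi.neg_def] using (((hasDerivAt_pow 2 x).const_mul (π * ρ)).neg)
    have h2 : HasDerivAt (fun x => -Real.exp (-(π * ρ * x ^ 2)))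
        (-(Real.exp (-(π * ρ * x ^ 2)) * -(π * ρ * (2 * x)))) x := (h1.exp).neg
    convert h2 using 1
    ring
  have hii : IntervalIntegrable (fun x : ℝ => 2 * π * ρ * x * Real.exp (-(π * ρ * x ^ 2))) volume 0 R :=
    hcont.intervalIntegrable 0 R
  have hint : ∫ x in (0:ℝ)..R, 2 * π * ρ * x * Real.exp (-(π * ρ * x ^ 2))
      = 1 - Real.exp (-(π * ρ * R ^ 2)) := by
    rw [intervalIntegral.integral_eq_sub_of_hasDerivAt hderiv hii]
    simp
    ring
  rw [← hint, intervalIntegral.integral_of_le hR]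
  rw [← ofReal_integral_eq_lintegral_ofReal]
  · exact hcont.integrableOn_Ioc
  · filter_upwards [ae_restrict_mem measurableSet_Ioc] with x hx
    have : 0 < x := hx.1
    positivity

/-- CDF of the NNCC power: if `r` has nearest-neighbor density `2πρ r e^{−πρ r²}`
independent of `θ` uniform on `[−π/2, 3π/2]`, then for `p > 2εη r₁²`,
`P(P^NC ≤ p) = ∫_{−π/2}^{3π/2} (1 − e^{−πρ R₂(θ)²})/(2π) dθ`, where
`P^NC = (2ζ+εη) r² + 2εη r₁ cos θ · r + 2εη r₁²` and
`R₂(θ) = (−εη r₁ cos θ + √((εη r₁ cos θ)² − (2ζ+εη)(2εη r₁² − p)))/(2ζ+εη)`. -/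
theorem nncc_power_cdf {Ω : Type*} [MeasurableSpace Ω] (μ : Measure Ω)
    [IsProbabilityMeasure μ] (ρ ζ η ε r₁ P_out p : ℝ)
    (hρ : 0 < ρ) (hζ : 0 < ζ) (hη : 0 < η) (hr₁ : 0 < r₁)
    (hP1 : 0 < P_out) (hP2 : P_out < 1) (hε : ε = 1 + (1 - P_out) ^ 2)
    (X Θ : Ω → ℝ) (hX : Measurable X) (hΘ : Measurable Θ)
    (hlaw : Measure.map (fun ω => (X ω, Θ ω)) μ =
      (volume.withDensity fun r : ℝ =>
          ENNReal.ofReal (if 0 < r then 2 * π * ρ * r * Real.exp (-(π * ρ * r ^ 2)) else 0)).prod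
        (volume.withDensity fun θ : ℝ =>
          ENNReal.ofReal (if θ ∈ Set.Icc (-(π / 2)) (3 * π / 2) then 1 / (2 * π) else 0)))
    (hp : p > 2 * ε * η * r₁ ^ 2) :
    (μ {ω | (2 * ζ + ε * η) * (X ω) ^ 2
        + 2 * ε * η * r₁ * Real.cos (Θ ω) * X ω + 2 * ε * η * r₁ ^ 2 ≤ p}).toReal
      = ∫ θ in Set.Icc (-(π / 2)) (3 * π / 2),
          (1 - Real.exp (-(π * ρ *
            ((-(ε * η * r₁ * Real.cos θ)
              + Real.sqrt ((ε * η * r₁ * Real.cos θ) ^ 2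
                - (2 * ζ + ε * η) * (2 * ε * η * r₁ ^ 2 - p)))
             / (2 * ζ + ε * η)) ^ 2))) / (2 * π) := by
  have hπ : (0:ℝ) < π := Real.pi_pos
  have hε0 : 0 < ε := by nlinarith [sq_nonneg (1 - P_out)]
  have ha : 0 < 2 * ζ + ε * η := by positivity
  -- abbreviations
  set fr : ℝ → ℝ≥0∞ := fun r =>
    ENNReal.ofReal (if 0 < r then 2 * π * ρ * r * Real.exp (-(π * ρ * r ^ 2)) else 0) with hfr
  set fθ : ℝ → ℝ≥0∞ := fun θ =>
    ENNReal.ofReal (if θ ∈ Set.Icc (-(π / 2)) (3 * π / 2) then 1 / (2 * π) else 0) with hfθ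
  have hmr : Measurable fr := by
    apply Measurable.ennreal_ofReal
    apply Measurable.ite measurableSet_Ioi <;> fun_prop
  have hmθ : Measurable fθ := by
    apply Measurable.ennreal_ofReal
    exact Measurable.ite measurableSet_Icc measurable_const measurable_const
  set S : Set (ℝ × ℝ) := {q | (2 * ζ + ε * η) * q.1 ^ 2
      + 2 * ε * η * r₁ * Real.cos q.2 * q.1 + 2 * ε * η * r₁ ^ 2 ≤ p} with hS_def
  have hS : MeasurableSet S := by
    apply measurableSet_le _ measurable_const
    fun_prop
  have hev : {ω | (2 * ζ + ε * η) * (X ω) ^ 2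
      + 2 * ε * η * r₁ * Real.cos (Θ ω) * X ω + 2 * ε * η * r₁ ^ 2 ≤ p}
      = (fun ω => (X ω, Θ ω)) ⁻¹' S := rfl
  rw [hev, ← Measure.map_apply (hX.prodMk hΘ) hS, hlaw]
  rw [show (volume.withDensity fr).prod (volume.withDensity fθ)
      = Measure.map Prod.swap ((volume.withDensity fθ).prod (volume.withDensity fr)) from
      (Measure.prod_swap).symm]
  rw [Measure.map_apply measurable_swap hS,
    Measure.prod_apply (hS.preimage measurable_swap)]
  -- the inner section measure
  have hsec : ∀ θ : ℝ, (volume.withDensity fr) (Prod.mk θ ⁻¹' (Prod.swap ⁻¹' S))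
      = ENNReal.ofReal (1 - Real.exp (-(π * ρ *
          ((-(ε * η * r₁ * Real.cos θ)
            + Real.sqrt ((ε * η * r₁ * Real.cos θ) ^ 2
              - (2 * ζ + ε * η) * (2 * ε * η * r₁ ^ 2 - p)))
           / (2 * ζ + ε * η)) ^ 2))) := by
    intro θ
    have hsetm : MeasurableSet (Prod.mk θ ⁻¹' (Prod.swap ⁻¹' S)) :=
      (hS.preimage measurable_swap).preimage measurable_prodMk_left
    rw [withDensity_apply _ hsetm]
    have hind : fr = Set.indicator (Set.Ioi 0)
        (fun x : ℝ => ENNReal.ofReal (2 * π * ρ * x * Real.exp (-(π * ρ * x ^ 2)))) := by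
      funext x
      by_cases h : 0 < x <;> simp [hfr, Set.indicator_apply, h]
    rw [hind, lintegral_indicator measurableSet_Ioi,
      Measure.restrict_restrict measurableSet_Ioi]
    have hIoc : Set.Ioi 0 ∩ (Prod.mk θ ⁻¹' (Prod.swap ⁻¹' S))
        = Set.Ioc 0 ((-(ε * η * r₁ * Real.cos θ)
            + Real.sqrt ((ε * η * r₁ * Real.cos θ) ^ 2
              - (2 * ζ + ε * η) * (2 * ε * η * r₁ ^ 2 - p)))
           / (2 * ζ + ε * η)) := by
      ext x
      simp only [Set.mem_inter_iff, Set.mem_Ioi, Set.mem_preimage, Set.mem_Ioc, hS_def,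
        Set.mem_setOf_eq, Prod.swap_prod_mk]
      constructor
      · rintro ⟨hx, hq⟩
        refine ⟨hx, ?_⟩
        have := (quad_iff (2 * ζ + ε * η) (ε * η * r₁ * Real.cos θ)
          (2 * ε * η * r₁ ^ 2) p x ha hp hx).mp (by nlinarith)
        exact this
      · rintro ⟨hx, hq⟩
        refine ⟨hx, ?_⟩
        have := (quad_iff (2 * ζ + ε * η) (ε * η * r₁ * Real.cos θ)
          (2 * ε * η * r₁ ^ 2) p x ha hp hx).mpr hq
        nlinarith
    rw [hIoc]
    exact dint ρ _ hρ (le_of_lt (quad_pos _ _ _ _ ha hp))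
  rw [lintegral_congr hsec]
  rw [lintegral_withDensity_eq_lintegral_mul volume hmθ (by fun_prop)]
  have hGcont : Continuous fun θ : ℝ => (1 - Real.exp (-(π * ρ *
          ((-(ε * η * r₁ * Real.cos θ)
            + Real.sqrt ((ε * η * r₁ * Real.cos θ) ^ 2
              - (2 * ζ + ε * η) * (2 * ε * η * r₁ ^ 2 - p)))
           / (2 * ζ + ε * η)) ^ 2))) / (2 * π) := by fun_prop
  have hGnn : ∀ θ : ℝ, 0 ≤ (1 - Real.exp (-(π * ρ *
          ((-(ε * η * r₁ * Real.cos θ)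
            + Real.sqrt ((ε * η * r₁ * Real.cos θ) ^ 2
              - (2 * ζ + ε * η) * (2 * ε * η * r₁ ^ 2 - p)))
           / (2 * ζ + ε * η)) ^ 2))) / (2 * π) := by
    intro θ
    apply div_nonneg _ (by positivity)
    have : Real.exp (-(π * ρ *
          ((-(ε * η * r₁ * Real.cos θ)
            + Real.sqrt ((ε * η * r₁ * Real.cos θ) ^ 2
              - (2 * ζ + ε * η) * (2 * ε * η * r₁ ^ 2 - p)))
           / (2 * ζ + ε * η)) ^ 2)) ≤ 1 := by
      rw [Real.exp_le_one_iff]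
      have : (0:ℝ) ≤ π * ρ * ((-(ε * η * r₁ * Real.cos θ)
            + Real.sqrt ((ε * η * r₁ * Real.cos θ) ^ 2
              - (2 * ζ + ε * η) * (2 * ε * η * r₁ ^ 2 - p)))
           / (2 * ζ + ε * η)) ^ 2 := by positivity
      linarith
    linarith
  have hmul : ∀ θ : ℝ, (fθ * fun θ => ENNReal.ofReal (1 - Real.exp (-(π * ρ *
          ((-(ε * η * r₁ * Real.cos θ)
            + Real.sqrt ((ε * η * r₁ * Real.cos θ) ^ 2
              - (2 * ζ + ε * η) * (2 * ε * η * r₁ ^ 2 - p)))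
           / (2 * ζ + ε * η)) ^ 2)))) θ
      = ENNReal.ofReal ((Set.Icc (-(π / 2)) (3 * π / 2)).indicator
          (fun θ => (1 - Real.exp (-(π * ρ *
          ((-(ε * η * r₁ * Real.cos θ)
            + Real.sqrt ((ε * η * r₁ * Real.cos θ) ^ 2
              - (2 * ζ + ε * η) * (2 * ε * η * r₁ ^ 2 - p)))
           / (2 * ζ + ε * η)) ^ 2))) / (2 * π)) θ) := by
    intro θ
    simp only [Pi.mul_apply, hfθ, Set.indicator_apply]
    by_cases h : θ ∈ Set.Icc (-(π / 2)) (3 * π / 2)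
    · rw [if_pos h, if_pos h, ← ENNReal.ofReal_mul (by positivity)]
      congr 1
      ring
    · rw [if_neg h, if_neg h]
      simp
  rw [lintegral_congr hmul]
  rw [← ofReal_integral_eq_lintegral_ofReal]
  · rw [integral_indicator measurableSet_Icc, ENNReal.toReal_ofReal]
    exact setIntegral_nonneg measurableSet_Icc fun θ _ => hGnn θ
  · exact (hGcont.integrableOn_Icc).integrable_indicator measurableSet_Icc
  · exact Filter.Eventually.of_forall (Set.indicator_nonneg fun θ _ => hGnn θ)
end
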